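/- arXiv:1907.00806 — 2 statements merged into one kernel-verified Lean document; each statement's English description precedes it below -/
import Mathlib

section
/- Let K be an integer with 1 ≤ K ≤ N and λ_K > 0. Then the total squared error of approximating the samples by their expansion on the first K POD modes equals the sum of the discarded eigenvalues: Σ_{i=1}^N ‖u_i − Σ_{j=1}^K ⟨u_i, φ_j⟩ φ_j‖² = Σ_{s=K+1}^N λ_s. Moreover Σ_{i=1}^N ‖u_i‖² = Σ_{s=1}^N λ_s, so that whenever not all u_i are zero, the relative error satisfies (Σ_{i=1}^N ‖u_i − Σ_{j=1}^K ⟨u_i, φ_j⟩ φ_j‖²) / (Σ_{i=1}^N ‖u_i‖²) = (Σ_{s=K+1}^N λ_s) / (Σ_{s=1}^N λ_s). -/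
open RealInnerProductSpace

/-- **POD error formula (Proposition 3.1 of the paper).** With the POD setup (samples
`u_1, …, u_N` in a real Hilbert space, Gram matrix `σ_{ij} = ⟪u_i, u_j⟫` with
eigenvalues `λ_1 ≥ … ≥ λ_N ≥ 0` and orthonormal eigenvectors `v^{(s)}`, POD modes
`φ_s = λ_s^{-1/2} Σ_i v^{(s)}_i u_i`), if `1 ≤ K ≤ N` and `λ_K > 0`, then the total
squared error of approximating the samples by their expansion on the first `K` POD
modes equals `Σ_{s>K} λ_s`; moreover `Σ_i ‖u_i‖² = Σ_s λ_s`, so when not all samples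
vanish the relative error equals `(Σ_{s>K} λ_s)/(Σ_s λ_s)`. -/
theorem pod_truncation_error
    {H : Type*} [NormedAddCommGroup H] [InnerProductSpace ℝ H] [CompleteSpace H]
    (N : ℕ) (hN : 0 < N) (u : Fin N → H)
    (lam : Fin N → ℝ) (v : Fin N → Fin N → ℝ)
    (hmono : Antitone lam) (hnonneg : ∀ s, 0 ≤ lam s)
    (heig : ∀ s : Fin N,
      (Matrix.of fun i j : Fin N => ⟪u i, u j⟫).mulVec (v s) = lam s • v s)
    (horth : ∀ s t : Fin N, ∑ i, v s i * v t i = if s = t then (1 : ℝ) else 0)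
    (φ : Fin N → H)
    (hφ : ∀ s, φ s = (Real.sqrt (lam s))⁻¹ • ∑ i, v s i • u i)
    (K : ℕ) (hK1 : 1 ≤ K) (hKN : K ≤ N)
    (hlamK : 0 < lam ⟨K - 1, by omega⟩) :
    (∑ i, ‖u i - ∑ j ∈ Finset.univ.filter (fun j : Fin N => (j : ℕ) < K),
        ⟪u i, φ j⟫ • φ j‖ ^ 2) =
      ∑ s ∈ Finset.univ.filter (fun s : Fin N => K ≤ (s : ℕ)), lam s ∧
    (∑ i, ‖u i‖ ^ 2) = ∑ s, lam s ∧
    ((∃ i, u i ≠ 0) →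
      (∑ i, ‖u i - ∑ j ∈ Finset.univ.filter (fun j : Fin N => (j : ℕ) < K),
          ⟪u i, φ j⟫ • φ j‖ ^ 2) / (∑ i, ‖u i‖ ^ 2) =
        (∑ s ∈ Finset.univ.filter (fun s : Fin N => K ≤ (s : ℕ)), lam s) /
          (∑ s, lam s)) := by

  classical
  -- positivity for indices < K
  have hpos : ∀ j : Fin N, (j : ℕ) < K → 0 < lam j := by
    intro j hj
    have hle : (⟨K - 1, by omega⟩ : Fin N) ≤ j ∨ j ≤ ⟨K - 1, by omega⟩ := le_total _ _
    have : j ≤ (⟨K - 1, by omega⟩ : Fin N) := by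
      rw [Fin.le_def]; simp; omega
    exact lt_of_lt_of_le hlamK (hmono this)
  have hsym : ∀ i j : Fin N, ⟪u i, u j⟫ = ⟪u j, u i⟫ := fun i j => real_inner_comm _ _
  -- eigen equation pointwise
  have heig' : ∀ (s i : Fin N), ∑ j, ⟪u i, u j⟫ * v s j = lam s * v s i := by
    intro s i
    have := congrFun (heig s) i
    simpa [Matrix.mulVec, dotProduct] using this
  -- inner products with modes
  have hinner : ∀ s : Fin N, 0 < lam s → ∀ i, ⟪u i, φ s⟫ = Real.sqrt (lam s) * v s i := by
    intro s hs i
    have hsq : Real.sqrt (lam s) * Real.sqrt (lam s) = lam s :=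
      Real.mul_self_sqrt (le_of_lt hs)
    have hne : Real.sqrt (lam s) ≠ 0 := by positivity
    rw [hφ s, real_inner_smul_right, inner_sum]
    simp_rw [real_inner_smul_right]
    have : ∑ j, v s j * ⟪u i, u j⟫ = lam s * v s i := by
      rw [← heig' s i]; exact Finset.sum_congr rfl fun j _ => mul_comm _ _
    rw [this]
    have h2 : lam s * v s i = Real.sqrt (lam s) * (Real.sqrt (lam s) * v s i) := by
      rw [← mul_assoc, hsq]
    rw [h2, ← mul_assoc, inv_mul_cancel₀ hne, one_mul]
  -- orthonormality of modes
  have hON : ∀ s t : Fin N, 0 < lam s → 0 < lam t →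
      ⟪φ s, φ t⟫ = if s = t then (1 : ℝ) else 0 := by
    intro s t hs ht
    have hne : Real.sqrt (lam s) ≠ 0 := by positivity
    rw [hφ s, real_inner_smul_left, sum_inner]
    simp_rw [real_inner_smul_left]
    have : ∀ i, ⟪u i, φ t⟫ = Real.sqrt (lam t) * v t i := hinner t ht
    simp_rw [this]
    have hsum : ∑ i, v s i * (Real.sqrt (lam t) * v t i)
        = Real.sqrt (lam t) * ∑ i, v s i * v t i := by
      rw [Finset.mul_sum]
      exact Finset.sum_congr rfl fun i _ => by ring
    rw [hsum, horth s t]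
    by_cases h : s = t
    · subst h
      simp [inv_mul_cancel₀ hne, ← mul_assoc]
    · simp only [if_neg h, mul_zero]
  -- completeness: ∑ s, v s i * v s j = δ ij
  have hcomplete : ∀ i j : Fin N, ∑ s, v s i * v s j = if i = j then (1 : ℝ) else 0 := by
    intro i j
    have hVVt : (Matrix.of v) * (Matrix.of v).transpose = 1 := by
      ext s t
      simp [Matrix.mul_apply, Matrix.one_apply, horth s t]
    have hVtV : (Matrix.of v).transpose * (Matrix.of v) = 1 := mul_eq_one_comm.mp hVVt
    have := congrFun (congrFun hVtV i) j
    simpa [Matrix.mul_apply, Matrix.one_apply, mul_comm] using this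
  -- trace identity
  have htrace : (∑ i, ‖u i‖ ^ 2) = ∑ s, lam s := by
    have h1 : ∀ s : Fin N, lam s = ∑ i, v s i * (∑ j, ⟪u i, u j⟫ * v s j) := by
      intro s
      simp_rw [heig' s]
      have : ∑ i, v s i * (lam s * v s i) = lam s * ∑ i, v s i * v s i := by
        rw [Finset.mul_sum]
        exact Finset.sum_congr rfl fun i _ => by ring
      rw [this, horth s s]; simp
    calc (∑ i, ‖u i‖ ^ 2) = ∑ i, ⟪u i, u i⟫ := by
          refine Finset.sum_congr rfl fun i _ => ?_
          rw [real_inner_self_eq_norm_sq]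
      _ = ∑ i, ∑ j, ⟪u i, u j⟫ * (if i = j then (1:ℝ) else 0) := by
          refine Finset.sum_congr rfl fun i _ => ?_
          rw [Finset.sum_eq_single i]
          · simp
          · intro j _ hj; simp [Ne.symm hj]
          · simp
      _ = ∑ i, ∑ j, ⟪u i, u j⟫ * ∑ s, v s i * v s j := by
          refine Finset.sum_congr rfl fun i _ => Finset.sum_congr rfl fun j _ => ?_
          rw [hcomplete i j]
      _ = ∑ i, ∑ s, v s i * (∑ j, ⟪u i, u j⟫ * v s j) := by
          refine Finset.sum_congr rfl fun i _ => ?_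
          calc (∑ j, ⟪u i, u j⟫ * ∑ s, v s i * v s j)
              = ∑ j, ∑ s, ⟪u i, u j⟫ * (v s i * v s j) :=
                Finset.sum_congr rfl fun j _ => Finset.mul_sum _ _ _
            _ = ∑ s, ∑ j, ⟪u i, u j⟫ * (v s i * v s j) := Finset.sum_comm
            _ = ∑ s, v s i * (∑ j, ⟪u i, u j⟫ * v s j) := by
                refine Finset.sum_congr rfl fun s _ => ?_
                rw [Finset.mul_sum]
                exact Finset.sum_congr rfl fun j _ => by ring
      _ = ∑ s, ∑ i, v s i * (∑ j, ⟪u i, u j⟫ * v s j) := Finset.sum_comm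
      _ = ∑ s, lam s := by
          refine Finset.sum_congr rfl fun s _ => (h1 s).symm
  -- per-sample error
  set S := Finset.univ.filter (fun j : Fin N => (j : ℕ) < K) with hSdef
  have hSpos : ∀ j ∈ S, 0 < lam j := by
    intro j hj
    exact hpos j (by simpa [hSdef] using hj)
  have herr_i : ∀ i : Fin N,
      ‖u i - ∑ j ∈ S, ⟪u i, φ j⟫ • φ j‖ ^ 2 = ‖u i‖ ^ 2 - ∑ j ∈ S, lam j * (v j i) ^ 2 := by
    intro i
    set w := ∑ j ∈ S, ⟪u i, φ j⟫ • φ j with hw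
    have hiw : ⟪u i, w⟫ = ∑ j ∈ S, ⟪u i, φ j⟫ ^ 2 := by
      rw [hw, inner_sum]
      refine Finset.sum_congr rfl fun j _ => ?_
      rw [real_inner_smul_right]; ring
    have hww : ⟪w, w⟫ = ∑ j ∈ S, ⟪u i, φ j⟫ ^ 2 := by
      rw [hw, sum_inner]
      refine Finset.sum_congr rfl fun j hj => ?_
      rw [real_inner_smul_left, inner_sum]
      simp_rw [real_inner_smul_right]
      rw [Finset.sum_eq_single j]
      · rw [hON j j (hSpos j hj) (hSpos j hj)]; simp; ring
      · intro t ht htj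
        rw [hON j t (hSpos j hj) (hSpos t ht)]
        simp [Ne.symm htj]
      · simp [hj]
    have hsq : ∀ j ∈ S, ⟪u i, φ j⟫ ^ 2 = lam j * (v j i) ^ 2 := by
      intro j hj
      rw [hinner j (hSpos j hj) i, mul_pow, Real.sq_sqrt (le_of_lt (hSpos j hj))]
    have hns := norm_sub_sq_real (u i) w
    rw [hiw, ← real_inner_self_eq_norm_sq w, hww] at hns
    rw [hns, Finset.sum_congr rfl hsq]
    ring
  have hmain : (∑ i, ‖u i - ∑ j ∈ S, ⟪u i, φ j⟫ • φ j‖ ^ 2) =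
      ∑ s ∈ Finset.univ.filter (fun s : Fin N => K ≤ (s : ℕ)), lam s := by
    have hsplit : (Finset.univ : Finset (Fin N)) =
        S ∪ Finset.univ.filter (fun s : Fin N => K ≤ (s : ℕ)) := by
      ext s; simp [hSdef]; omega
    have hdisj : Disjoint S (Finset.univ.filter (fun s : Fin N => K ≤ (s : ℕ))) := by
      rw [Finset.disjoint_filter]
      intro s _ hs; omega
    have hsum_univ : ∑ s, lam s = ∑ j ∈ S, lam j +
        ∑ s ∈ Finset.univ.filter (fun s : Fin N => K ≤ (s : ℕ)), lam s := by
      conv_lhs => rw [hsplit]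
      rw [Finset.sum_union hdisj]
    have hSsum : ∀ j ∈ S, ∑ i, lam j * (v j i) ^ 2 = lam j := by
      intro j hj
      rw [← Finset.mul_sum]
      have := horth j j
      rw [if_pos rfl] at this
      have h2 : ∑ i, (v j i) ^ 2 = 1 := by
        rw [← this]; exact Finset.sum_congr rfl fun i _ => sq (v j i)
      rw [h2, mul_one]
    calc (∑ i, ‖u i - ∑ j ∈ S, ⟪u i, φ j⟫ • φ j‖ ^ 2)
        = ∑ i, (‖u i‖ ^ 2 - ∑ j ∈ S, lam j * (v j i) ^ 2) :=
          Finset.sum_congr rfl fun i _ => herr_i i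
      _ = (∑ i, ‖u i‖ ^ 2) - ∑ i, ∑ j ∈ S, lam j * (v j i) ^ 2 := Finset.sum_sub_distrib _ _
      _ = (∑ s, lam s) - ∑ j ∈ S, lam j := by
          rw [htrace, Finset.sum_comm]
          congr 1
          exact Finset.sum_congr rfl hSsum
      _ = ∑ s ∈ Finset.univ.filter (fun s : Fin N => K ≤ (s : ℕ)), lam s := by
          rw [hsum_univ]; ring
  exact ⟨hmain, htrace, fun _ => by rw [hmain, htrace]⟩
end

section
/- Let (Ω, F, P) be a probability space, A a real normed vector space, H a real Hilbert space, and T : A → H a map satisfying the Lipschitz bound ‖T(x) − T(y)‖ ≤ C_T ‖x − y‖ for all x, y ∈ A, where C_T ≥ 0. Let W ⊆ H be a closed subspace with orthogonal projection P_W : H → H, let δ₁, δ₂ ≥ 0, and let a_1, …, a_N ∈ A satisfy ‖T(a_i) − P_W(T(a_i))‖ ≤ δ₂ for every i = 1, …, N. Let a : Ω → A be a map such that ω ↦ ‖T(a(ω)) − P_W(T(a(ω)))‖ is measurable and ω ↦ min_{1 ≤ i ≤ N} ‖a(ω) − a_i‖ is measurable with E[min_{1 ≤ i ≤ N} ‖a(ω)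 − a_i‖] ≤ δ₁. Then E[‖T(a(ω)) − P_W(T(a(ω)))‖] ≤ 2 C_T δ₁ + δ₂. -/
open MeasureTheory

/-- **Abstract form of the paper's main error theorem (Theorem 3.2).** Let `T : A → H`
be a `C_T`-Lipschitz map from a normed space of coefficients into a Hilbert space of
solutions, `W` a closed subspace of `H` with orthogonal projection `P_W`, and
`a_1, …, a_N` coefficient samples whose solutions are within `δ₂` of `W`. If the random
coefficient `a(ω)` satisfies `E[min_i ‖a(ω) − a_i‖] ≤ δ₁`, then
`E[‖T(a(ω)) − P_W(T(a(ω)))‖] ≤ 2 C_T δ₁ + δ₂`. -/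
theorem data_driven_basis_error_estimate
    {Ω : Type*} [MeasurableSpace Ω] (P : Measure Ω) [IsProbabilityMeasure P]
    {A : Type*} [NormedAddCommGroup A] [NormedSpace ℝ A]
    {H : Type*} [NormedAddCommGroup H] [InnerProductSpace ℝ H] [CompleteSpace H]
    (T : A → H) (CT : ℝ) (hCT : 0 ≤ CT)
    (hLip : ∀ x y : A, ‖T x - T y‖ ≤ CT * ‖x - y‖)
    (W : Submodule ℝ H) [CompleteSpace W]
    (δ₁ δ₂ : ℝ) (hδ₁ : 0 ≤ δ₁) (hδ₂ : 0 ≤ δ₂)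
    (N : ℕ) (hN : 0 < N) (as : Fin N → A)
    (hsamples : ∀ i : Fin N, ‖T (as i) - (W.orthogonalProjectionOnto (T (as i)) : H)‖ ≤ δ₂)
    (a : Ω → A)
    (hmeas : Measurable fun ω => ‖T (a ω) - (W.orthogonalProjectionOnto (T (a ω)) : H)‖)
    (hmin_int : Integrable (fun ω => ⨅ i : Fin N, ‖a ω - as i‖) P)
    (hδ₁bound : (∫ ω, (⨅ i : Fin N, ‖a ω - as i‖) ∂P) ≤ δ₁) :
    (∫ ω, ‖T (a ω) - (W.orthogonalProjectionOnto (T (a ω)) : H)‖ ∂P) ≤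
      2 * CT * δ₁ + δ₂ := by
  haveI : Nonempty (Fin N) := ⟨⟨0, hN⟩⟩
  -- pointwise bound
  have hpt : ∀ ω, ‖T (a ω) - (W.orthogonalProjectionOnto (T (a ω)) : H)‖ ≤
      2 * CT * (⨅ i : Fin N, ‖a ω - as i‖) + δ₂ := by
    intro ω
    obtain ⟨i, hi⟩ := exists_eq_ciInf_of_finite (f := fun i : Fin N => ‖a ω - as i‖)
    set u := T (a ω)
    set v := T (as i)
    have h1 : ‖u - v‖ ≤ CT * ‖a ω - as i‖ := hLip _ _
    have h2 : ‖(W.orthogonalProjectionOnto v : H) - (W.orthogonalProjectionOnto u : H)‖ ≤ ‖v - u‖ := by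
      calc ‖(W.orthogonalProjectionOnto v : H) - (W.orthogonalProjectionOnto u : H)‖
          = ‖((W.orthogonalProjectionOnto (v - u) : W) : H)‖ := by
            rw [map_sub]; rfl
        _ = ‖W.orthogonalProjectionOnto (v - u)‖ := rfl
        _ ≤ ‖W.orthogonalProjectionOnto‖ * ‖v - u‖ :=
            (W.orthogonalProjectionOnto).le_opNorm (v - u)
        _ ≤ 1 * ‖v - u‖ := by
            gcongr
            exact Submodule.orthogonalProjectionOnto_norm_le W
        _ = ‖v - u‖ := one_mul _
    have h3 : ‖v - u‖ = ‖u - v‖ := norm_sub_rev _ _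
    have htri : ‖u - (W.orthogonalProjectionOnto u : H)‖ ≤
        ‖u - v‖ + ‖v - (W.orthogonalProjectionOnto v : H)‖ +
        ‖(W.orthogonalProjectionOnto v : H) - (W.orthogonalProjectionOnto u : H)‖ := by
      have := norm_add₃_le (a := u - v) (b := v - (W.orthogonalProjectionOnto v : H))
        (c := (W.orthogonalProjectionOnto v : H) - (W.orthogonalProjectionOnto u : H))
      simpa using this
    rw [← hi]
    have hs := hsamples i
    have h2' := h2.trans_eq h3
    nlinarith [htri, h1, h2', hs]
  have hg : Integrable (fun ω => 2 * CT * (⨅ i : Fin N, ‖a ω - as i‖) + δ₂) P :=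
    (hmin_int.const_mul _).add (integrable_const _)
  have hf : Integrable (fun ω => ‖T (a ω) - (W.orthogonalProjectionOnto (T (a ω)) : H)‖) P := by
    refine Integrable.mono' hg hmeas.aestronglyMeasurable ?_
    filter_upwards with ω
    rw [Real.norm_of_nonneg (norm_nonneg _)]
    exact hpt ω
  calc (∫ ω, ‖T (a ω) - (W.orthogonalProjectionOnto (T (a ω)) : H)‖ ∂P)
      ≤ ∫ ω, (2 * CT * (⨅ i : Fin N, ‖a ω - as i‖) + δ₂) ∂P :=
        integral_mono hf hg hpt
    _ = 2 * CT * (∫ ω, (⨅ i : Fin N, ‖a ω - as i‖) ∂P) + δ₂ := by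
        rw [integral_add (hmin_int.const_mul _) (integrable_const _),
          integral_const_mul, integral_const, probReal_univ]
        simp
    _ ≤ 2 * CT * δ₁ + δ₂ := by nlinarith
end
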